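/- Soundness and completeness of transitive FD chaining for singleton-left-hand-side dependencies: let Σ be a set of functional dependencies of the form a → b with single attributes a, b over a finite attribute set U, viewed as a relation R on U. Then for single attributes a ≠ b, the FD a → b is derivable from Σ by Armstrong's axioms if and only if (a, b) is in the reflexive-transitive closure of R. -/
import Mathlib


/-- Armstrong derivability: `Derives Σ X Y` means the FD `X → Y` is derivable from `Σ`
using membership, reflexivity, augmentation and transitivity. -/
inductive Derives {U : Type*} (Sigma : Set (Set U × Set U)) : Set U → Set U → Prop
  | mem {X Y : Set U} : (X, Y) ∈ Sigma → Derives Sigma X Y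
  | refl {X Y : Set U} : Y ⊆ X → Derives Sigma X Y
  | aug {X Y : Set U} (W : Set U) : Derives Sigma X Y → Derives Sigma (X ∪ W) (Y ∪ W)
  | trans {X Y Z : Set U} : Derives Sigma X Y → Derives Sigma Y Z → Derives Sigma X Z

private lemma derives_sound {U : Type*} (Sigma : Set (Set U × Set U))
    (hsing : ∀ p ∈ Sigma, ∃ a b : U, p = ({a}, {b}))
    {X Y : Set U} (h : Derives Sigma X Y) :
    Y ⊆ {y | ∃ x ∈ X, Relation.ReflTransGen
      (fun x y : U => (({x} : Set U), ({y} : Set U)) ∈ Sigma) x y} := by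
  set R := fun x y : U => (({x} : Set U), ({y} : Set U)) ∈ Sigma with hR
  induction h with
  | mem hXY =>
    obtain ⟨c, d, hcd⟩ := hsing _ hXY
    obtain ⟨h1, h2⟩ := Prod.mk.injEq .. ▸ hcd
    subst h1 h2
    intro y hy
    rw [Set.mem_singleton_iff] at hy; subst hy
    exact ⟨c, rfl, Relation.ReflTransGen.single hXY⟩
  | refl hYX => exact fun y hy => ⟨y, hYX hy, Relation.ReflTransGen.refl⟩
  | aug W _ ih =>
    rintro y (hy | hy)
    · obtain ⟨x, hx, hxy⟩ := ih hy
      exact ⟨x, Or.inl hx, hxy⟩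
    · exact ⟨y, Or.inr hy, Relation.ReflTransGen.refl⟩
  | trans _ _ ih1 ih2 =>
    intro z hz
    obtain ⟨y, hy, hyz⟩ := ih2 hz
    obtain ⟨x, hx, hxy⟩ := ih1 hy
    exact ⟨x, hx, hxy.trans hyz⟩

theorem singleton_fd_derivable_iff_reflTransGen {U : Type*} [Fintype U]
    (Sigma : Set (Set U × Set U))
    (hsing : ∀ p ∈ Sigma, ∃ a b : U, p = ({a}, {b}))
    (a b : U) (hab : a ≠ b) :
    Derives Sigma {a} {b} ↔
      Relation.ReflTransGen (fun x y : U => (({x} : Set U), ({y} : Set U)) ∈ Sigma) a b := by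
  constructor
  · intro h
    obtain ⟨x, hx, hxb⟩ := derives_sound Sigma hsing h rfl
    rw [Set.mem_singleton_iff] at hx; subst hx
    exact hxb
  · intro h
    clear hab
    induction h with
    | refl => exact Derives.refl (le_refl _)
    | tail _ hst ih => exact ih.trans (Derives.mem hst)
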